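/- A permutation π of length n avoids all four patterns 1324, 1342, 1432 and 4132 if and only if either π avoids 132, or in every occurrence of the pattern 132 in π, the entry playing the role of 3 is the maximal element n. -/

import Mathlib

def Contains {n k : ℕ} (τ : Equiv.Perm (Fin n)) (p : Fin k → ℕ) : Prop :=
  ∃ f : Fin k → Fin n, StrictMono f ∧ ∀ a b, p a < p b ↔ τ (f a) < τ (f b)

def AvoidsPat {n k : ℕ} (τ : Equiv.Perm (Fin n)) (p : Fin k → ℕ) : Prop := ¬ Contains τ p

lemma mono4 {n : ℕ} {a b c d : Fin n} (hab : a < b) (hbc : b < c) (hcd : c < d) :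
    StrictMono ![a,b,c,d] := by
  intro x y hxy
  fin_cases x <;> fin_cases y <;> simp_all <;>
    first
      | exact hab | exact hbc | exact hcd
      | exact hab.trans hbc | exact hbc.trans hcd | exact (hab.trans hbc).trans hcd

lemma mono3 {n : ℕ} {a b c : Fin n} (hab : a < b) (hbc : b < c) :
    StrictMono ![a,b,c] := by
  intro x y hxy
  fin_cases x <;> fin_cases y <;> simp_all <;>
    first | exact hab | exact hbc | exact hab.trans hbc

lemma contains_of_mono {n k : ℕ} (τ : Equiv.Perm (Fin n)) (p : Fin k → ℕ)
    (hp : Function.Injective p) (f : Fin k → Fin n) (hf : StrictMono f)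
    (h : ∀ x y, p x < p y → τ (f x) < τ (f y)) : Contains τ p := by
  refine ⟨f, hf, fun a b => ⟨h a b, fun hlt => ?_⟩⟩
  rcases lt_trichotomy (p a) (p b) with h1 | h1 | h1
  · exact h1
  · rw [hp h1] at hlt; exact absurd hlt (lt_irrefl _)
  · exact absurd (h b a h1) (lt_asymm hlt)

lemma c132 {n : ℕ} (π : Equiv.Perm (Fin n)) {a b c : Fin n} (hab : a < b) (hbc : b < c)
    (h1 : π a < π c) (h2 : π c < π b) : Contains π ![1,3,2] := by
  apply contains_of_mono π _ (by decide) ![a,b,c] (mono3 hab hbc)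
  intro x y
  fin_cases x <;> fin_cases y <;> simp <;>
    first | exact h1 | exact h2 | exact h1.trans h2

lemma c4 {n : ℕ} (π : Equiv.Perm (Fin n)) (p : Fin 4 → ℕ) (hp : Function.Injective p)
    {a b c d : Fin n} (hab : a < b) (hbc : b < c) (hcd : c < d)
    (h : ∀ x y, p x < p y → π (![a,b,c,d] x) < π (![a,b,c,d] y)) : Contains π p :=
  contains_of_mono π p hp _ (mono4 hab hbc hcd) h

theorem stmt16 (n : ℕ) (π : Equiv.Perm (Fin n)) :
    (AvoidsPat π ![1,3,2,4] ∧ AvoidsPat π ![1,3,4,2] ∧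
     AvoidsPat π ![1,4,3,2] ∧ AvoidsPat π ![4,1,3,2]) ↔
    (AvoidsPat π ![1,3,2] ∨
      ∀ j i k : Fin n, j < i → i < k → π j < π k → π k < π i →
        (π i : ℕ) + 1 = n) := by
  constructor
  · rintro ⟨H1, H2, H3, H4⟩
    by_cases hC : Contains π ![1,3,2]
    · right
      intro j i k hji hik h1 h2
      by_contra hne
      have hn : 0 < n := j.pos
      have hvi : (π i : ℕ) + 1 < n := by have := (π i).is_lt; omega
      set m : Fin n := π.symm ⟨n-1, by omega⟩ with hm
      have hπm : π m = ⟨n-1, by omega⟩ := π.apply_symm_apply _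
      have h3 : π i < π m := by
        rw [hπm]; exact Fin.lt_def.mpr (by simp; omega)
      have h13 : π j < π i := h1.trans h2
      rcases lt_trichotomy m j with hmj | hmj | hmj
      · -- 4132 at (m, j, i, k)
        refine H4 (c4 π _ (by decide) hmj hji hik ?_)
        intro x y
        fin_cases x <;> fin_cases y <;> simp <;>
          first
            | exact h1
            | exact h2
            | exact h3
            | exact h13
            | exact h1.trans h2
            | exact h2.trans h3
            | exact h13.trans h3
            | exact (h1.trans h2).trans h3
      · exact absurd (h13.trans h3) (by rw [hmj]; exact lt_irrefl _)
      · rcases lt_trichotomy m i with hmi | hmi | hmi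
        · -- 1432 at (j, m, i, k)
          refine H3 (c4 π _ (by decide) hmj hmi hik ?_)
          intro x y
          fin_cases x <;> fin_cases y <;> simp <;>
            first
                | exact h1
                | exact h2
                | exact h3
                | exact h13
                | exact h1.trans h2
                | exact h2.trans h3
                | exact h13.trans h3
                | exact (h1.trans h2).trans h3
        · exact absurd h3 (by rw [hmi]; exact lt_irrefl _)
        · rcases lt_trichotomy m k with hmk | hmk | hmk
          · -- 1342 at (j, i, m, k)
            refine H2 (c4 π _ (by decide) hji hmi hmk ?_)
            intro x y
            fin_cases x <;> fin_cases y <;> simp <;>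
              first
                    | exact h1
                    | exact h2
                    | exact h3
                    | exact h13
                    | exact h1.trans h2
                    | exact h2.trans h3
                    | exact h13.trans h3
                    | exact (h1.trans h2).trans h3
          · exact absurd (h2.trans h3) (by rw [hmk]; exact lt_irrefl _)
          · -- 1324 at (j, i, k, m)
            refine H1 (c4 π _ (by decide) hji hik hmk ?_)
            intro x y
            fin_cases x <;> fin_cases y <;> simp <;>
              first
                    | exact h1
                    | exact h2
                    | exact h3
                    | exact h13
                    | exact h1.trans h2
                    | exact h2.trans h3
                    | exact h13.trans h3
                    | exact (h1.trans h2).trans h3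
    · left; exact hC
  · intro H
    refine ⟨?_, ?_, ?_, ?_⟩ <;> rintro ⟨f, hf, hv⟩
    · -- 1324
      have e02 : π (f 0) < π (f 2) := (hv 0 2).mp (by decide)
      have e21 : π (f 2) < π (f 1) := (hv 2 1).mp (by decide)
      have e13 : π (f 1) < π (f 3) := (hv 1 3).mp (by decide)
      rcases H with H | H
      · exact H (c132 π (hf (show (0:Fin 4) < 1 by decide))
          (hf (show (1:Fin 4) < 2 by decide)) e02 e21)
      · have := H (f 0) (f 1) (f 2) (hf (by decide)) (hf (by decide)) e02 e21
        have := (π (f 3)).is_lt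
        omega
    · -- 1342
      have e03 : π (f 0) < π (f 3) := (hv 0 3).mp (by decide)
      have e31 : π (f 3) < π (f 1) := (hv 3 1).mp (by decide)
      have e12 : π (f 1) < π (f 2) := (hv 1 2).mp (by decide)
      rcases H with H | H
      · exact H (c132 π (hf (show (0:Fin 4) < 1 by decide))
          (hf (show (1:Fin 4) < 3 by decide)) e03 e31)
      · have := H (f 0) (f 1) (f 3) (hf (by decide)) (hf (by decide)) e03 e31
        have := (π (f 2)).is_lt
        omega
    · -- 1432
      have e03 : π (f 0) < π (f 3) := (hv 0 3).mp (by decide)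
      have e32 : π (f 3) < π (f 2) := (hv 3 2).mp (by decide)
      have e21 : π (f 2) < π (f 1) := (hv 2 1).mp (by decide)
      rcases H with H | H
      · exact H (c132 π (hf (show (0:Fin 4) < 2 by decide))
          (hf (show (2:Fin 4) < 3 by decide)) e03 e32)
      · have := H (f 0) (f 2) (f 3) (hf (by decide)) (hf (by decide)) e03 e32
        have := (π (f 1)).is_lt
        omega
    · -- 4132
      have e13 : π (f 1) < π (f 3) := (hv 1 3).mp (by decide)
      have e32 : π (f 3) < π (f 2) := (hv 3 2).mp (by decide)
      have e20 : π (f 2) < π (f 0) := (hv 2 0).mp (by decide)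
      rcases H with H | H
      · exact H (c132 π (hf (show (1:Fin 4) < 2 by decide))
          (hf (show (2:Fin 4) < 3 by decide)) e13 e32)
      · have := H (f 1) (f 2) (f 3) (hf (by decide)) (hf (by decide)) e13 e32
        have := (π (f 0)).is_lt
        omega
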